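/- Assume the positivity assumption G₀ ≥ δ P-a.s. Then for every σ(W)-measurable Q : Ω → ℝ with values in [0,1], δ·E[(Q − Q₀)²] ≤ E[A·(Y − Q)²] − E[A·(Y − Q₀)²] ≤ E[(Q − Q₀)²]; that is, the loss-based dissimilarity d₀(Q,Q₀) = E[A(Y−Q)²] − E[A(Y−Q₀)²] is equivalent (up to the constants δ and 1) to the squared L²(P)-distance ‖Q − Q₀‖²_{L²(P)} (the paper's claim that since G₀ is bounded away from zero, the loss-based dissimilarity is equivalent with ‖Q − Q₀‖²_{P₀}). -/

import Mathlib

open MeasureTheory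

private lemma integrable_of_bdd' {Ω : Type*} [MeasurableSpace Ω] (P : Measure Ω)
    [IsFiniteMeasure P] {f : Ω → ℝ} (hf : AEStronglyMeasurable f P) (C : ℝ)
    (h : ∀ ω, |f ω| ≤ C) : Integrable f P :=
  (integrable_const C).mono' hf (Filter.Eventually.of_forall fun ω => by
    simpa [Real.norm_eq_abs] using h ω)

/-- Under the positivity assumption `G₀ ≥ δ` a.s., the loss-based dissimilarity for the
treatment-specific-mean loss is equivalent (up to the constants `δ` and `1`) to the squared
`L²(P)`-distance between `Q` and `Q₀`. -/
theorem stmt_1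
    {Ω 𝒲 : Type*} [MeasurableSpace Ω] [MeasurableSpace 𝒲]
    (P : Measure Ω) [IsProbabilityMeasure P]
    (W : Ω → 𝒲) (A Y G₀ Q₀ : Ω → ℝ)
    (hW : Measurable W) (hA : Measurable A) (hY : Measurable Y)
    (hAbin : ∀ ω, A ω = 0 ∨ A ω = 1)
    (hYrange : ∀ ω, Y ω ∈ Set.Icc (0:ℝ) 1)
    (hG₀ : G₀ =ᵐ[P] P[A|MeasurableSpace.comap W inferInstance])
    (δ : ℝ) (hδ : δ ∈ Set.Ioo (0:ℝ) 1)
    (hpos : ∀ᵐ ω ∂P, δ ≤ G₀ ω)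
    (hQ₀meas : Measurable[MeasurableSpace.comap W inferInstance] Q₀)
    (hQ₀range : ∀ ω, Q₀ ω ∈ Set.Icc (0:ℝ) 1)
    (hQ₀orth : ∀ f : Ω → ℝ, Measurable[MeasurableSpace.comap W inferInstance] f →
      (∃ C : ℝ, ∀ ω, |f ω| ≤ C) →
      ∫ ω, A ω * (Y ω - Q₀ ω) * f ω ∂P = 0)
    (Q : Ω → ℝ)
    (hQmeas : Measurable[MeasurableSpace.comap W inferInstance] Q)
    (hQrange : ∀ ω, Q ω ∈ Set.Icc (0:ℝ) 1) :
    δ * (∫ ω, (Q ω - Q₀ ω) ^ 2 ∂P)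
        ≤ (∫ ω, A ω * (Y ω - Q ω) ^ 2 ∂P) - (∫ ω, A ω * (Y ω - Q₀ ω) ^ 2 ∂P) ∧
      (∫ ω, A ω * (Y ω - Q ω) ^ 2 ∂P) - (∫ ω, A ω * (Y ω - Q₀ ω) ^ 2 ∂P)
        ≤ ∫ ω, (Q ω - Q₀ ω) ^ 2 ∂P := by
  have hm : MeasurableSpace.comap W (inferInstance : MeasurableSpace 𝒲) ≤
      ‹MeasurableSpace Ω› := hW.comap_le
  have hQ : Measurable Q := hQmeas.mono hm le_rfl
  have hQ₀ : Measurable Q₀ := hQ₀meas.mono hm le_rfl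
  -- bounds
  have hA01 : ∀ ω, 0 ≤ A ω ∧ A ω ≤ 1 := fun ω => by
    rcases hAbin ω with h | h <;> simp [h]
  have habs : ∀ ω, |Q ω - Q₀ ω| ≤ 1 := fun ω => by
    have h1 := hQrange ω; have h2 := hQ₀range ω
    rw [abs_le]; constructor <;> [linarith [h1.1, h2.2]; linarith [h1.2, h2.1]]
  have hsq_bdd : ∀ ω, |(Q ω - Q₀ ω) ^ 2| ≤ 1 := fun ω => by
    rw [abs_of_nonneg (sq_nonneg _), sq_le_one_iff_abs_le_one]; exact habs ω
  -- integrability facts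
  have hg_meas : Measurable fun ω => (Q ω - Q₀ ω) ^ 2 := (hQ.sub hQ₀).pow_const 2
  have hg_int : Integrable (fun ω => (Q ω - Q₀ ω) ^ 2) P :=
    integrable_of_bdd' P hg_meas.aestronglyMeasurable 1 hsq_bdd
  have hAg_int : Integrable (fun ω => A ω * (Q ω - Q₀ ω) ^ 2) P :=
    integrable_of_bdd' P (hA.mul hg_meas).aestronglyMeasurable 1 (fun ω => by
      rw [abs_mul, abs_of_nonneg (hA01 ω).1]
      calc A ω * |(Q ω - Q₀ ω) ^ 2| ≤ 1 * 1 :=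
            mul_le_mul (hA01 ω).2 (hsq_bdd ω) (abs_nonneg _) zero_le_one
        _ = 1 := one_mul 1)
  have hsq_int : ∀ (f : Ω → ℝ), Measurable f → (∀ ω, f ω ∈ Set.Icc (0:ℝ) 1) →
      Integrable (fun ω => A ω * (Y ω - f ω) ^ 2) P := by
    intro f hf hfr
    refine integrable_of_bdd' P (hA.mul ((hY.sub hf).pow_const 2)).aestronglyMeasurable 1
      (fun ω => ?_)
    have h1 := hYrange ω; have h2 := hfr ω
    have hb : |Y ω - f ω| ≤ 1 := by
      rw [abs_le]; constructor <;> [linarith [h1.1, h2.2]; linarith [h1.2, h2.1]]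
    rw [abs_mul, abs_of_nonneg (hA01 ω).1]
    have : |(Y ω - f ω) ^ 2| ≤ 1 := by
      rw [abs_of_nonneg (sq_nonneg _), sq_le_one_iff_abs_le_one]; exact hb
    calc A ω * |(Y ω - f ω) ^ 2| ≤ 1 * 1 :=
          mul_le_mul (hA01 ω).2 this (abs_nonneg _) zero_le_one
      _ = 1 := one_mul 1
  have hcross_int : Integrable (fun ω => A ω * (Y ω - Q₀ ω) * (Q₀ ω - Q ω)) P := by
    refine integrable_of_bdd' P
      (((hA.mul (hY.sub hQ₀)).mul (hQ₀.sub hQ))).aestronglyMeasurable 1 (fun ω => ?_)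
    have h1 := hYrange ω; have h2 := hQ₀range ω; have h3 := hQrange ω
    have hb1 : |A ω * (Y ω - Q₀ ω)| ≤ 1 := by
      rw [abs_mul, abs_of_nonneg (hA01 ω).1]
      have : |Y ω - Q₀ ω| ≤ 1 := by
        rw [abs_le]; constructor <;> [linarith [h1.1, h2.2]; linarith [h1.2, h2.1]]
      calc A ω * |Y ω - Q₀ ω| ≤ 1 * 1 :=
            mul_le_mul (hA01 ω).2 this (abs_nonneg _) zero_le_one
        _ = 1 := one_mul 1
    have hb2 : |Q₀ ω - Q ω| ≤ 1 := by
      rw [abs_le]; constructor <;> [linarith [h2.1, h3.2]; linarith [h2.2, h3.1]]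
    calc |A ω * (Y ω - Q₀ ω) * (Q₀ ω - Q ω)| = |A ω * (Y ω - Q₀ ω)| * |Q₀ ω - Q ω| :=
          abs_mul _ _
      _ ≤ 1 * 1 := mul_le_mul hb1 hb2 (abs_nonneg _) zero_le_one
      _ = 1 := one_mul 1
  -- cross term vanishes
  have hcross : ∫ ω, A ω * (Y ω - Q₀ ω) * (Q₀ ω - Q ω) ∂P = 0 :=
    hQ₀orth (fun ω => Q₀ ω - Q ω) (hQ₀meas.sub hQmeas) ⟨2, fun ω => by
      have h2 := hQ₀range ω; have h3 := hQrange ω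
      rw [abs_le]
      constructor <;> [linarith [h2.1, h3.2]; linarith [h2.2, h3.1]]⟩
  -- key decomposition
  have hdecomp : (∫ ω, A ω * (Y ω - Q ω) ^ 2 ∂P) - (∫ ω, A ω * (Y ω - Q₀ ω) ^ 2 ∂P)
      = ∫ ω, A ω * (Q ω - Q₀ ω) ^ 2 ∂P := by
    have hpt : ∀ ω, A ω * (Y ω - Q ω) ^ 2
        = A ω * (Y ω - Q₀ ω) ^ 2 + A ω * (Q ω - Q₀ ω) ^ 2
          + 2 * (A ω * (Y ω - Q₀ ω) * (Q₀ ω - Q ω)) := fun ω => by ring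
    have hsum : ∫ ω, (A ω * (Y ω - Q₀ ω) ^ 2 + A ω * (Q ω - Q₀ ω) ^ 2
          + 2 * (A ω * (Y ω - Q₀ ω) * (Q₀ ω - Q ω))) ∂P
        = (∫ ω, A ω * (Y ω - Q₀ ω) ^ 2 ∂P) + (∫ ω, A ω * (Q ω - Q₀ ω) ^ 2 ∂P)
          + 2 * ∫ ω, A ω * (Y ω - Q₀ ω) * (Q₀ ω - Q ω) ∂P := by
      have hint12 : Integrable (fun ω => A ω * (Y ω - Q₀ ω) ^ 2
          + A ω * (Q ω - Q₀ ω) ^ 2) P := (hsq_int Q₀ hQ₀ hQ₀range).add hAg_int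
      have hint3 : Integrable (fun ω => 2 * (A ω * (Y ω - Q₀ ω) * (Q₀ ω - Q ω))) P :=
        hcross_int.const_mul 2
      rw [integral_add hint12 hint3, integral_add (hsq_int Q₀ hQ₀ hQ₀range) hAg_int,
        integral_const_mul]
    have hLHS : ∫ ω, A ω * (Y ω - Q ω) ^ 2 ∂P
        = ∫ ω, (A ω * (Y ω - Q₀ ω) ^ 2 + A ω * (Q ω - Q₀ ω) ^ 2
          + 2 * (A ω * (Y ω - Q₀ ω) * (Q₀ ω - Q ω))) ∂P :=
      integral_congr_ae (Filter.Eventually.of_forall fun ω => hpt ω)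
    rw [hLHS, hsum, hcross]; ring
  rw [hdecomp]
  constructor
  · -- lower bound via conditional expectation
    haveI : SigmaFinite (P.trim hm) := inferInstance
    have hA_int : Integrable A P := integrable_of_bdd' P hA.aestronglyMeasurable 1
      (fun ω => by rw [abs_of_nonneg (hA01 ω).1]; exact (hA01 ω).2)
    have hgA_int : Integrable (fun ω => (Q ω - Q₀ ω) ^ 2 * A ω) P := by
      have := hAg_int; simpa [mul_comm] using this
    have hpull : P[(fun ω => (Q ω - Q₀ ω) ^ 2) * A|MeasurableSpace.comap W (inferInstance : MeasurableSpace 𝒲)]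
        =ᵐ[P] (fun ω => (Q ω - Q₀ ω) ^ 2) * P[A|MeasurableSpace.comap W (inferInstance : MeasurableSpace 𝒲)] :=
      condExp_mul_of_stronglyMeasurable_left
        (((hQmeas.sub hQ₀meas).pow_const 2).stronglyMeasurable) hgA_int hA_int
    have heq1 : ∫ ω, A ω * (Q ω - Q₀ ω) ^ 2 ∂P
        = ∫ ω, (Q ω - Q₀ ω) ^ 2 * (P[A|MeasurableSpace.comap W (inferInstance : MeasurableSpace 𝒲)]) ω ∂P := by
      calc ∫ ω, A ω * (Q ω - Q₀ ω) ^ 2 ∂P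
          = ∫ ω, ((fun ω => (Q ω - Q₀ ω) ^ 2) * A) ω ∂P := by
            refine integral_congr_ae (Filter.Eventually.of_forall fun ω => ?_)
            simp [mul_comm]
        _ = ∫ ω, (P[(fun ω => (Q ω - Q₀ ω) ^ 2) * A|MeasurableSpace.comap W (inferInstance : MeasurableSpace 𝒲)]) ω ∂P :=
            (integral_condExp hm).symm
        _ = ∫ ω, (Q ω - Q₀ ω) ^ 2 * (P[A|MeasurableSpace.comap W (inferInstance : MeasurableSpace 𝒲)]) ω ∂P := integral_congr_ae hpull
    have heq2 : ∫ ω, (Q ω - Q₀ ω) ^ 2 * (P[A|MeasurableSpace.comap W (inferInstance : MeasurableSpace 𝒲)]) ω ∂P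
        = ∫ ω, (Q ω - Q₀ ω) ^ 2 * G₀ ω ∂P := by
      refine integral_congr_ae ?_
      filter_upwards [hG₀] with ω hω
      rw [hω]
    have hG₀_int : Integrable (fun ω => (Q ω - Q₀ ω) ^ 2 * G₀ ω) P := by
      have h1 : Integrable (fun ω => (Q ω - Q₀ ω) ^ 2 * (P[A|MeasurableSpace.comap W (inferInstance : MeasurableSpace 𝒲)]) ω) P :=
        (integrable_condExp).bdd_mul (c := 1) hg_meas.aestronglyMeasurable
          (Filter.Eventually.of_forall fun ω => by simpa [Real.norm_eq_abs] using hsq_bdd ω)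
      refine h1.congr ?_
      filter_upwards [hG₀] with ω hω
      rw [hω]
    rw [heq1, heq2, ← integral_const_mul]
    refine integral_mono_ae (hg_int.const_mul δ) hG₀_int ?_
    filter_upwards [hpos] with ω hω
    have := sq_nonneg (Q ω - Q₀ ω)
    calc δ * (Q ω - Q₀ ω) ^ 2 = (Q ω - Q₀ ω) ^ 2 * δ := by ring
      _ ≤ (Q ω - Q₀ ω) ^ 2 * G₀ ω := mul_le_mul_of_nonneg_left hω this
  · -- upper bound
    refine integral_mono hAg_int hg_int fun ω => ?_
    calc A ω * (Q ω - Q₀ ω) ^ 2 ≤ 1 * (Q ω - Q₀ ω) ^ 2 :=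
          mul_le_mul_of_nonneg_right (hA01 ω).2 (sq_nonneg _)
      _ = (Q ω - Q₀ ω) ^ 2 := one_mul _
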